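/- Let V be uniformly distributed in the Euclidean ball of radius r > 0 centered at the origin in R^m, and let w ∈ R^m be a fixed vector with ‖w‖ ≤ M. Then for every ε > 0, the probability that |⟨V, w⟩| ≥ ε is at most 2 e^{-ε² m / (2 r² M²)}. -/

import Mathlib

open MeasureTheory Real Metric
open scoped InnerProductSpace ENNReal

theorem stmt_2 (m : ℕ) (r M ε : ℝ) (hr : 0 < r) (hM : 0 < M) (hε : 0 < ε)
    (w : EuclideanSpace ℝ (Fin m)) (hw : ‖w‖ ≤ M) :
    volume {x : EuclideanSpace ℝ (Fin m) | ‖x‖ ≤ r ∧ ε ≤ abs (⟪x, w⟫_ℝ)} ≤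
      ENNReal.ofReal (2 * Real.exp (-(ε ^ 2 * m) / (2 * r ^ 2 * M ^ 2))) *
        volume (closedBall (0 : EuclideanSpace ℝ (Fin m)) r) := by
  by_cases hw0 : w = 0
  · have h0 : {x : EuclideanSpace ℝ (Fin m) | ‖x‖ ≤ r ∧ ε ≤ abs (⟪x, w⟫_ℝ)} = ∅ := by
      ext x; simp [hw0, hε.not_ge, inner_zero_right]
    rw [h0]
    simp
  have hnw0 : (0:ℝ) < ‖w‖ := norm_pos_iff.mpr hw0
  set t : ℝ := ε / ‖w‖ with ht_def
  have ht : 0 < t := div_pos hε hnw0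
  have htw : t * ‖w‖ = ε := div_mul_cancel₀ ε hnw0.ne'
  by_cases htr : r < t
  · have h0 : {x : EuclideanSpace ℝ (Fin m) | ‖x‖ ≤ r ∧ ε ≤ abs (⟪x, w⟫_ℝ)} = ∅ := by
      ext x
      simp only [Set.mem_setOf_eq, Set.mem_empty_iff_false, iff_false, not_and]
      intro hx hεx
      have h1 : abs (⟪x, w⟫_ℝ) ≤ ‖x‖ * ‖w‖ := abs_real_inner_le_norm x w
      have h2 : ‖x‖ * ‖w‖ ≤ r * ‖w‖ := mul_le_mul_of_nonneg_right hx hnw0.le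
      have : ε < ε := by
        calc ε ≤ abs (⟪x, w⟫_ℝ) := hεx
        _ ≤ r * ‖w‖ := h1.trans h2
        _ < t * ‖w‖ := mul_lt_mul_of_pos_right htr hnw0
        _ = ε := htw
      exact this.false
    rw [h0]
    simp
  push_neg at htr  -- htr : t ≤ r
  set s : ℝ := Real.sqrt (r^2 - t^2) with hs_def
  have hrt2 : 0 ≤ r^2 - t^2 := by nlinarith
  have hs0 : 0 ≤ s := Real.sqrt_nonneg _
  set u : EuclideanSpace ℝ (Fin m) := (t / ‖w‖) • w with hu_def
  -- containment in two balls
  have key : ∀ x : EuclideanSpace ℝ (Fin m), ‖x‖ ≤ r → t * ‖w‖ ≤ ⟪x, w⟫_ℝ →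
      ‖x - u‖ ≤ s := by
    intro x hx hix
    have hiu : ⟪x, u⟫_ℝ = (t / ‖w‖) * ⟪x, w⟫_ℝ := real_inner_smul_right x w _
    have hnu : ‖u‖ = t := by
      rw [hu_def, norm_smul, Real.norm_eq_abs,
        abs_of_nonneg (by positivity : (0:ℝ) ≤ t / ‖w‖)]
      field_simp
    have h1 : ‖x - u‖^2 = ‖x‖^2 - 2 * ⟪x, u⟫_ℝ + ‖u‖^2 := norm_sub_sq_real x u
    have h2 : t^2 ≤ ⟪x, u⟫_ℝ := by
      rw [hiu]
      have h5 : t / ‖w‖ * (t * ‖w‖) ≤ t / ‖w‖ * ⟪x, w⟫_ℝ :=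
        mul_le_mul_of_nonneg_left hix (by positivity)
      calc t^2 = t / ‖w‖ * (t * ‖w‖) := by field_simp
      _ ≤ _ := h5
    have h3 : ‖x - u‖^2 ≤ r^2 - t^2 := by
      rw [h1, hnu]
      have hx2 : ‖x‖^2 ≤ r^2 := by nlinarith [norm_nonneg x]
      nlinarith
    calc ‖x - u‖ = Real.sqrt (‖x - u‖^2) := (Real.sqrt_sq (norm_nonneg _)).symm
    _ ≤ s := Real.sqrt_le_sqrt h3
  have hsub : {x : EuclideanSpace ℝ (Fin m) | ‖x‖ ≤ r ∧ ε ≤ abs (⟪x, w⟫_ℝ)} ⊆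
      closedBall u s ∪ closedBall (-u) s := by
    intro x ⟨hx, hεx⟩
    rcases le_abs'.mp hεx with h | h
    · right
      have hx' : ‖-x‖ ≤ r := by rwa [norm_neg]
      have hi' : t * ‖w‖ ≤ ⟪-x, w⟫_ℝ := by
        rw [inner_neg_left, htw]; linarith
      have hk := key (-x) hx' hi'
      rw [mem_closedBall, dist_eq_norm]
      have : x - -u = -((-x) - u) := by abel
      rw [this, norm_neg]
      exact hk
    · left
      rw [mem_closedBall, dist_eq_norm]
      exact key x hx (htw ▸ h)
  -- volume computation
  have hfr : Module.finrank ℝ (EuclideanSpace ℝ (Fin m)) = m := by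
    simp [finrank_euclideanSpace]
  have hvol1 : volume (closedBall u s) =
      ENNReal.ofReal (s ^ m) * volume (closedBall (0 : EuclideanSpace ℝ (Fin m)) 1) := by
    rw [Measure.addHaar_closedBall' volume u hs0, hfr]
  have hvol2 : volume (closedBall (-u) s) =
      ENNReal.ofReal (s ^ m) * volume (closedBall (0 : EuclideanSpace ℝ (Fin m)) 1) := by
    rw [Measure.addHaar_closedBall' volume (-u) hs0, hfr]
  have hvolr : volume (closedBall (0 : EuclideanSpace ℝ (Fin m)) r) =
      ENNReal.ofReal (r ^ m) * volume (closedBall (0 : EuclideanSpace ℝ (Fin m)) 1) := by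
    rw [Measure.addHaar_closedBall' volume _ hr.le, hfr]
  -- real inequality : 2 * s^m ≤ 2 * exp(A) * r^m
  have hA : s ^ m ≤ Real.exp (-(ε ^ 2 * m) / (2 * r ^ 2 * M ^ 2)) * r ^ m := by
    have h1 : s ≤ r * Real.exp (-(t^2) / (2 * r^2)) := by
      have e1 : r^2 - t^2 ≤ r^2 * Real.exp (-(t^2) / r^2) := by
        have hid : r^2 * (-(t^2)/r^2 + 1) = r^2 - t^2 := by field_simp; ring
        have h6 := mul_le_mul_of_nonneg_left (Real.add_one_le_exp (-(t^2)/r^2)) (sq_nonneg r)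
        linarith
      have e2 : r * Real.exp (-(t^2) / (2 * r^2)) = Real.sqrt (r^2 * Real.exp (-(t^2) / r^2)) := by
        rw [Real.sqrt_mul (by positivity), Real.sqrt_sq hr.le]
        congr 1
        rw [show -(t^2) / r^2 = -(t^2) / (2*r^2) + -(t^2) / (2*r^2) by ring, Real.exp_add,
          Real.sqrt_mul_self (Real.exp_pos _).le]
      rw [e2]
      exact Real.sqrt_le_sqrt e1
    have h2 : s ^ m ≤ (r * Real.exp (-(t^2) / (2 * r^2))) ^ m :=
      pow_le_pow_left₀ hs0 h1 m
    have h3 : Real.exp (-(t^2) / (2 * r^2)) ^ m = Real.exp (-(t^2) * m / (2 * r^2)) := by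
      rw [← Real.exp_nat_mul]; ring_nf
    have h4 : Real.exp (-(t^2) * m / (2 * r^2)) ≤ Real.exp (-(ε ^ 2 * m) / (2 * r ^ 2 * M ^ 2)) := by
      apply Real.exp_le_exp.mpr
      rw [div_le_div_iff₀ (by positivity) (by positivity)]
      have htM : ε^2 / M^2 ≤ t^2 := by
        rw [ht_def, div_pow]
        apply div_le_div_of_nonneg_left (by positivity) (by positivity)
        exact pow_le_pow_left₀ hnw0.le hw 2
      have htM2 : ε^2 ≤ t^2 * M^2 := (div_le_iff₀ (by positivity)).mp htM
      nlinarith [mul_le_mul_of_nonneg_left htM2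
        (by positivity : (0:ℝ) ≤ (m:ℝ) * (2 * r^2))]
    calc s ^ m ≤ (r * Real.exp (-(t^2) / (2 * r^2))) ^ m := h2
    _ = Real.exp (-(t^2) * m / (2 * r^2)) * r ^ m := by rw [mul_pow, h3]; ring
    _ ≤ _ := mul_le_mul_of_nonneg_right h4 (by positivity)
  calc volume {x : EuclideanSpace ℝ (Fin m) | ‖x‖ ≤ r ∧ ε ≤ abs (⟪x, w⟫_ℝ)}
      ≤ volume (closedBall u s ∪ closedBall (-u) s) := measure_mono hsub
    _ ≤ volume (closedBall u s) + volume (closedBall (-u) s) := measure_union_le _ _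
    _ = ENNReal.ofReal (2 * s ^ m) * volume (closedBall (0 : EuclideanSpace ℝ (Fin m)) 1) := by
        rw [hvol1, hvol2, ← two_mul, ← mul_assoc,
          ENNReal.ofReal_mul (by norm_num : (0:ℝ) ≤ 2), ENNReal.ofReal_ofNat]
    _ ≤ ENNReal.ofReal (2 * Real.exp (-(ε ^ 2 * m) / (2 * r ^ 2 * M ^ 2)) * r ^ m) *
        volume (closedBall (0 : EuclideanSpace ℝ (Fin m)) 1) :=
        mul_le_mul_left (ENNReal.ofReal_le_ofReal (by nlinarith)) _
    _ = ENNReal.ofReal (2 * Real.exp (-(ε ^ 2 * m) / (2 * r ^ 2 * M ^ 2))) *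
        volume (closedBall (0 : EuclideanSpace ℝ (Fin m)) r) := by
        rw [hvolr, ENNReal.ofReal_mul (by positivity), mul_assoc]
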